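/- arXiv:1412.0601 — 2 statements merged into one kernel-verified Lean document; each statement's English description precedes it below -/
import Mathlib

section
/- Let f₁, f₂, f₃, f₄ : ℂ → ℂ be holomorphic functions and define F : ℂ → ℂ² ≅ ℝ⁴ by F(z) = (f₁(z) + conj(f₂(z)), f₃(z) + conj(f₄(z))). Then F is conformal (i.e. |∂F/∂x| = |∂F/∂y| and ⟨∂F/∂x, ∂F/∂y⟩ = 0 with respect to the real inner product on ℝ⁴) if and only if f₁′f₂′ + f₃′f₄′ = 0 identically. -/
open Complex

/-- The minimal-surface parametrization built from four holomorphic functions. -/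
noncomputable def Fmin (f₁ f₂ f₃ f₄ : ℂ → ℂ) : ℂ → ℂ × ℂ := fun z =>
  (f₁ z + (starRingEnd ℂ) (f₂ z), f₃ z + (starRingEnd ℂ) (f₄ z))

lemma fderiv_Fmin (f₁ f₂ f₃ f₄ : ℂ → ℂ)
    (h₁ : Differentiable ℂ f₁) (h₂ : Differentiable ℂ f₂)
    (h₃ : Differentiable ℂ f₃) (h₄ : Differentiable ℂ f₄) (z v : ℂ) :
    fderiv ℝ (Fmin f₁ f₂ f₃ f₄) z v =
      (deriv f₁ z * v + (starRingEnd ℂ) (deriv f₂ z * v),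
       deriv f₃ z * v + (starRingEnd ℂ) (deriv f₄ z * v)) := by
  have hc : ∀ (f : ℂ → ℂ), Differentiable ℂ f →
      HasFDerivAt (fun w => (starRingEnd ℂ) (f w))
        (Complex.conjCLE.toContinuousLinearMap.comp
          (((ContinuousLinearMap.smulRight (1 : ℂ →L[ℂ] ℂ) (deriv f z))).restrictScalars ℝ)) z :=
    fun f h => (Complex.conjCLE.toContinuousLinearMap.hasFDerivAt).comp z
      (((h z).hasDerivAt.hasFDerivAt).restrictScalars ℝ)
  have hd : ∀ (f : ℂ → ℂ), Differentiable ℂ f →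
      HasFDerivAt f (((ContinuousLinearMap.smulRight (1 : ℂ →L[ℂ] ℂ) (deriv f z))).restrictScalars ℝ) z :=
    fun f h => ((h z).hasDerivAt.hasFDerivAt).restrictScalars ℝ
  have H : HasFDerivAt (fun x => (f₁ x + (starRingEnd ℂ) (f₂ x), f₃ x + (starRingEnd ℂ) (f₄ x))) _ z :=
    HasFDerivAt.prodMk ((hd f₁ h₁).add (hc f₂ h₂)) ((hd f₃ h₃).add (hc f₄ h₄))
  rw [show (fun x => (f₁ x + (starRingEnd ℂ) (f₂ x), f₃ x + (starRingEnd ℂ) (f₄ x))) = Fmin f₁ f₂ f₃ f₄ from rfl] at H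
  rw [H.fderiv]
  simp [mul_comm]

lemma pointwise_conformal (a b c d : ℂ) :
    (Complex.normSq (a * 1 + (starRingEnd ℂ) (b * 1)) +
        Complex.normSq (c * 1 + (starRingEnd ℂ) (d * 1)) =
      Complex.normSq (a * I + (starRingEnd ℂ) (b * I)) +
        Complex.normSq (c * I + (starRingEnd ℂ) (d * I)) ∧
      ((a * 1 + (starRingEnd ℂ) (b * 1)) * (starRingEnd ℂ) (a * I + (starRingEnd ℂ) (b * I)) +
        (c * 1 + (starRingEnd ℂ) (d * 1)) * (starRingEnd ℂ) (c * I + (starRingEnd ℂ) (d * I))).re = 0)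
    ↔ a * b + c * d = 0 := by
  simp only [Complex.ext_iff, Complex.normSq_apply, mul_one, Complex.add_re, Complex.add_im,
    Complex.mul_re, Complex.mul_im, Complex.conj_re, Complex.conj_im, Complex.I_re, Complex.I_im,
    Complex.zero_re, Complex.zero_im]
  constructor
  · rintro ⟨u, v⟩
    constructor <;> nlinarith [u, v]
  · rintro ⟨u, v⟩
    constructor <;> nlinarith [u, v]

theorem stmt_5 (f₁ f₂ f₃ f₄ : ℂ → ℂ)
    (h₁ : Differentiable ℂ f₁) (h₂ : Differentiable ℂ f₂)
    (h₃ : Differentiable ℂ f₃) (h₄ : Differentiable ℂ f₄) :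
    (∀ z : ℂ,
      Complex.normSq (fderiv ℝ (Fmin f₁ f₂ f₃ f₄) z 1).1 +
          Complex.normSq (fderiv ℝ (Fmin f₁ f₂ f₃ f₄) z 1).2 =
        Complex.normSq (fderiv ℝ (Fmin f₁ f₂ f₃ f₄) z I).1 +
          Complex.normSq (fderiv ℝ (Fmin f₁ f₂ f₃ f₄) z I).2 ∧
      ((fderiv ℝ (Fmin f₁ f₂ f₃ f₄) z 1).1 *
          (starRingEnd ℂ) (fderiv ℝ (Fmin f₁ f₂ f₃ f₄) z I).1 +
        (fderiv ℝ (Fmin f₁ f₂ f₃ f₄) z 1).2 *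
          (starRingEnd ℂ) (fderiv ℝ (Fmin f₁ f₂ f₃ f₄) z I).2).re = 0) ↔
    ∀ z : ℂ, deriv f₁ z * deriv f₂ z + deriv f₃ z * deriv f₄ z = 0 := by
  have key := fderiv_Fmin f₁ f₂ f₃ f₄ h₁ h₂ h₃ h₄
  constructor
  · intro h z
    have hz := h z
    rw [key z 1, key z I] at hz
    exact (pointwise_conformal _ _ _ _).mp hz
  · intro h z
    rw [key z 1, key z I]
    exact (pointwise_conformal _ _ _ _).mpr (h z)
end

section
/- Let N ≥ 2 be an integer. Define H : ℂ → ℂ² by H(z) = (2z^N + z̄^N, −(2N²/(2N−1)) z^{2N−1} + z̄). Then the number of unordered pairs {z₁, z₂} with z₁ ≠ z₂ and H(z₁) = H(z₂) is exactly N(N−1). -/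
open Complex

/-- The degenerate minimal surface H(z) = (2zᴺ + z̄ᴺ, −(2N²/(2N−1)) z^{2N−1} + z̄). -/
noncomputable def Hdeg (N : ℕ) : ℂ → ℂ × ℂ := fun z =>
  (2 * z ^ N + (starRingEnd ℂ) z ^ N,
   -((2 * (N : ℂ) ^ 2) / (2 * (N : ℂ) - 1)) * z ^ (2 * N - 1) + (starRingEnd ℂ) z)

private lemma pow_inj_nonneg {r s : ℝ} (hr : 0 ≤ r) (hs : 0 ≤ s) {n : ℕ} (hn : n ≠ 0)
    (h : r ^ n = s ^ n) : r = s :=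
  (pow_left_strictMonoOn₀ hn).injOn hr hs h

private lemma conj_cancel {a b : ℂ} (h : 2 * a + (starRingEnd ℂ) a = 2 * b + (starRingEnd ℂ) b) :
    a = b := by
  have hre := congrArg Complex.re h
  have him := congrArg Complex.im h
  simp only [Complex.add_re, Complex.add_im, Complex.mul_re, Complex.mul_im,
    Complex.conj_re, Complex.conj_im, Complex.re_ofNat, Complex.im_ofNat] at hre him
  exact Complex.ext (by linarith) (by linarith)

private lemma count_pairs (N : ℕ) (hN : 2 ≤ N) :
    (((Finset.range (2*N)) ×ˢ (Finset.range (2*N))).filter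
      (fun p => p.1 < p.2 ∧ p.1 % 2 = p.2 % 2)).card = N * (N - 1) := by
  classical
  set V : Finset (ℕ × ℕ) := ((Finset.range N) ×ˢ (Finset.range N)).filter
    (fun p => p.1 < p.2) with hV_def
  have hVcard : V.card = ∑ i ∈ Finset.range N, i := by
    have hV : V = (Finset.range N).biUnion
        (fun b => (Finset.range b).image (fun a => (a, b))) := by
      ext p
      simp only [hV_def, Finset.mem_filter, Finset.mem_product, Finset.mem_range,
        Finset.mem_biUnion, Finset.mem_image]
      obtain ⟨p1, p2⟩ := p
      constructor
      · rintro ⟨⟨h1, h2⟩, h3⟩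
        exact ⟨p2, h2, p1, h3, rfl⟩
      · rintro ⟨b, hb, a, ha, h⟩
        obtain ⟨rfl, rfl⟩ := Prod.mk.injEq .. |>.mp h
        exact ⟨⟨ha.trans hb, hb⟩, ha⟩
    rw [hV, Finset.card_biUnion]
    · apply Finset.sum_congr rfl
      intro b _
      rw [Finset.card_image_of_injective _ (fun a a' h => (Prod.mk.injEq _ _ _ _).mp h |>.1),
        Finset.card_range]
    · intro x _ y _ hxy
      rw [Function.onFun, Finset.disjoint_left]
      rintro p hp hq
      simp only [Finset.mem_image, Finset.mem_range] at hp hq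
      obtain ⟨a, _, rfl⟩ := hp
      obtain ⟨a', _, h⟩ := hq
      exact hxy ((Prod.mk.injEq _ _ _ _).mp h |>.2.symm ▸ rfl)
  have hbij : (((Finset.range (2*N)) ×ˢ (Finset.range (2*N))).filter
      (fun p => p.1 < p.2 ∧ p.1 % 2 = p.2 % 2)).card = (V ×ˢ Finset.range 2).card := by
    refine Finset.card_bij' (fun p _ => ((p.1/2, p.2/2), p.1 % 2))
      (fun q _ => (2*q.1.1 + q.2, 2*q.1.2 + q.2)) ?_ ?_ ?_ ?_ <;>
    · intro q hq
      simp only [hV_def, Finset.mem_filter, Finset.mem_product, Finset.mem_range,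
        Prod.ext_iff, Prod.mk.injEq] at hq ⊢
      omega
  rw [hbij, Finset.card_product, Finset.card_range, hVcard, Finset.sum_range_id_mul_two]

theorem stmt_8 (N : ℕ) (hN : 2 ≤ N) :
    {s : Set ℂ | ∃ z₁ z₂ : ℂ, z₁ ≠ z₂ ∧ s = {z₁, z₂} ∧ Hdeg N z₁ = Hdeg N z₂}.ncard
      = N * (N - 1) := by
  classical
  have hNR : (2:ℝ) ≤ (N:ℝ) := by exact_mod_cast hN
  set c : ℝ := 2 * (N:ℝ)^2 / (2*(N:ℝ) - 1) with hc_def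
  have hden : (0:ℝ) < 2*(N:ℝ) - 1 := by linarith
  have hc : 0 < c := by
    apply div_pos _ hden
    nlinarith
  have hcC : ((c:ℝ):ℂ) = (2 * (N:ℂ)^2) / (2*(N:ℂ) - 1) := by
    rw [hc_def]
    push_cast
    ring
  set ρ : ℝ := c ^ (-(1:ℝ)/(2*(N:ℝ)-2)) with hρ_def
  have hρ : 0 < ρ := Real.rpow_pos_of_pos hc _
  have hkey1 : c * ρ ^ (2*N-2) = 1 := by
    have h1 : ρ ^ (2*N-2) = c ^ (-1 : ℝ) := by
      rw [hρ_def, ← Real.rpow_natCast (c ^ (-(1:ℝ)/(2*(N:ℝ)-2))) (2*N-2),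
        ← Real.rpow_mul hc.le]
      congr 1
      have hcast : ((2*N-2:ℕ):ℝ) = 2*(N:ℝ)-2 := by
        rw [Nat.cast_sub (by omega)]
        push_cast
        ring
      rw [hcast]
      have h2 : 2*(N:ℝ)-2 ≠ 0 := by linarith
      field_simp
      rw [div_self (by linarith : (0:ℝ) < (N:ℝ)-1).ne']
    rw [h1, Real.rpow_neg_one, mul_inv_cancel₀ hc.ne']
  have hkey2 : c * ρ ^ (2*N) = ρ^2 := by
    have h : ρ ^ (2*N) = ρ^2 * ρ^(2*N-2) := by rw [← pow_add]; congr 1; omega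
    rw [h]
    linear_combination ρ^2 * hkey1
  set ζ : ℂ := Complex.exp (2*(Real.pi:ℂ)*I / ((2*N : ℕ):ℂ)) with hζ_def
  have hζ : IsPrimitiveRoot ζ (2*N) := Complex.isPrimitiveRoot_exp _ (by omega)
  have h2N0 : 2*N ≠ 0 := by omega
  have hζ0 : ζ ≠ 0 := hζ.ne_zero h2N0
  have hζN : ζ ^ N = -1 := by
    rw [hζ_def, ← Complex.exp_nat_mul]
    have harg : (N:ℂ) * (2*(Real.pi:ℂ)*I / ((2*N : ℕ):ℂ)) = Real.pi * I := by
      have hN0C : (N:ℂ) ≠ 0 := Nat.cast_ne_zero.mpr (by omega)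
      push_cast
      field_simp
    rw [harg, Complex.exp_pi_mul_I]
  have habsζ : ‖ζ‖ = 1 := by
    have h2 : ‖ζ‖ ^ (2*N) = 1 := by
      rw [← norm_pow, hζ.pow_eq_one, norm_one]
    exact pow_inj_nonneg (norm_nonneg _) zero_le_one (n := 2*N) h2N0
      (by rw [h2, one_pow])
  have hρC : ((ρ:ℝ):ℂ) ≠ 0 := by exact_mod_cast hρ.ne'
  haveI : NeZero (2*N) := ⟨by omega⟩
  -- characterization of solutions of c z^(2N-1) = conj z, z ≠ 0
  have hchar : ∀ z : ℂ, z ≠ 0 →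
      (((c:ℝ):ℂ) * z^(2*N-1) = (starRingEnd ℂ) z ↔ ∃ k, k < 2*N ∧ z = (ρ:ℝ) * ζ^k) := by
    intro z hz
    constructor
    · intro h
      have hmul : ((c:ℝ):ℂ) * z^(2*N) = (normSq z : ℂ) := by
        have hp : z^(2*N) = z^(2*N-1) * z := by rw [← pow_succ]; congr 1; omega
        calc ((c:ℝ):ℂ) * z^(2*N) = (((c:ℝ):ℂ) * z^(2*N-1)) * z := by rw [hp]; ring
          _ = (starRingEnd ℂ) z * z := by rw [h]
          _ = (normSq z : ℂ) := by rw [mul_comm, Complex.mul_conj]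
      have habs : c * ‖z‖^(2*N) = ‖z‖^2 := by
        have h2 := congrArg (fun w : ℂ => ‖w‖) hmul
        rw [norm_mul, norm_pow, Complex.norm_real, Complex.norm_real, Real.norm_eq_abs,
          Real.norm_eq_abs, abs_of_pos hc,
          _root_.abs_of_nonneg (normSq_nonneg z), Complex.normSq_eq_norm_sq] at h2
        exact h2
      have haz : 0 < ‖z‖ := norm_pos_iff.mpr hz
      have hazρ : ‖z‖ = ρ := by
        have h3 : c * ‖z‖^(2*N-2) = 1 := by
          have h4 : ‖z‖^(2*N) = ‖z‖^2 * ‖z‖^(2*N-2) := by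
            rw [← pow_add]; congr 1; omega
          rw [h4] at habs
          have h5 : ‖z‖^2 ≠ 0 := pow_ne_zero _ haz.ne'
          exact mul_left_cancel₀ h5 (by linear_combination habs)
        have h6 : ‖z‖^(2*N-2) = ρ^(2*N-2) := by
          apply mul_left_cancel₀ hc.ne'
          rw [h3, hkey1]
        exact pow_inj_nonneg haz.le hρ.le (by omega) h6
      have hz2N : z^(2*N) = ((ρ:ℝ):ℂ)^(2*N) := by
        have hcne : ((c:ℝ):ℂ) ≠ 0 := by exact_mod_cast hc.ne'
        apply mul_left_cancel₀ hcne
        rw [hmul]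
        have e1 : ((c:ℝ):ℂ) * ((ρ:ℝ):ℂ)^(2*N) = ((ρ:ℝ):ℂ)^2 := by
          push_cast
          exact_mod_cast congrArg Complex.ofReal hkey2
        rw [e1, Complex.normSq_eq_norm_sq, hazρ]
        push_cast
        ring
      have hdiv : (z / ((ρ:ℝ):ℂ))^(2*N) = 1 := by
        rw [div_pow, hz2N, div_self (pow_ne_zero _ hρC)]
      obtain ⟨k, hk, hke⟩ := hζ.eq_pow_of_pow_eq_one hdiv
      refine ⟨k, hk, ?_⟩
      rw [hke]
      field_simp
    · rintro ⟨k, hk, rfl⟩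
      have hz0 : ((ρ:ℝ):ℂ) * ζ^k ≠ 0 := mul_ne_zero hρC (pow_ne_zero _ hζ0)
      have hmul : ((c:ℝ):ℂ) * (((ρ:ℝ):ℂ)*ζ^k)^(2*N) =
          (starRingEnd ℂ) (((ρ:ℝ):ℂ)*ζ^k) * (((ρ:ℝ):ℂ)*ζ^k) := by
        rw [mul_comm ((starRingEnd ℂ) _), Complex.mul_conj]
        have h1 : (((ρ:ℝ):ℂ)*ζ^k)^(2*N) = ((ρ:ℝ):ℂ)^(2*N) := by
          rw [mul_pow]
          have hswap : (ζ^k)^(2*N) = (ζ^(2*N))^k := by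
            rw [← pow_mul, ← pow_mul, mul_comm]
          rw [hswap, hζ.pow_eq_one, one_pow, mul_one]
        have h2 : normSq (((ρ:ℝ):ℂ)*ζ^k) = ρ^2 := by
          rw [Complex.normSq_mul, Complex.normSq_eq_norm_sq, Complex.normSq_eq_norm_sq, norm_pow,
            habsζ, Complex.norm_real, Real.norm_eq_abs, abs_of_pos hρ]
          ring
        rw [h1, h2]
        push_cast
        exact_mod_cast congrArg Complex.ofReal hkey2
      apply mul_right_cancel₀ hz0
      have hh : (((ρ:ℝ):ℂ)*ζ^k)^(2*N) = (((ρ:ℝ):ℂ)*ζ^k)^(2*N-1) * (((ρ:ℝ):ℂ)*ζ^k) := by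
        rw [← pow_succ]; congr 1; omega
      rw [mul_assoc, ← hh]
      exact hmul
  -- parity criterion
  have hpar : ∀ j k : ℕ, ((((ρ:ℝ):ℂ)*ζ^j)^N = (((ρ:ℝ):ℂ)*ζ^k)^N ↔ j % 2 = k % 2) := by
    intro j k
    have hρN : (((ρ:ℝ):ℂ))^N ≠ 0 := pow_ne_zero _ hρC
    have e : ∀ m : ℕ, (ζ^m)^N = (-1:ℂ)^m := by
      intro m
      rw [← pow_mul, mul_comm, pow_mul, hζN]
    rw [mul_pow, mul_pow, e, e]
    constructor
    · intro h
      have h2 : (-1:ℂ)^j = (-1)^k := mul_left_cancel₀ hρN h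
      rw [neg_one_pow_eq_pow_mod_two, neg_one_pow_eq_pow_mod_two (n := k)] at h2
      rcases Nat.mod_two_eq_zero_or_one j with hj | hj <;>
        rcases Nat.mod_two_eq_zero_or_one k with hk | hk <;>
        rw [hj, hk] at h2 ⊢ <;> first | rfl | (norm_num at h2)
    · intro h
      rw [neg_one_pow_eq_pow_mod_two, neg_one_pow_eq_pow_mod_two (n := k), h]
  -- injectivity of k ↦ ρ ζ^k
  have hzinj : ∀ j k, j < 2*N → k < 2*N → ((ρ:ℝ):ℂ)*ζ^j = ((ρ:ℝ):ℂ)*ζ^k → j = k := by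
    intro j k hj hk h
    exact hζ.pow_inj hj hk (mul_left_cancel₀ hρC h)
  -- Hdeg equality for parametrized points
  have hHeq : ∀ j k : ℕ, j % 2 = k % 2 → j < 2*N → k < 2*N →
      Hdeg N (((ρ:ℝ):ℂ)*ζ^j) = Hdeg N (((ρ:ℝ):ℂ)*ζ^k) := by
    intro j k hpjk hj hk
    have hE : ∀ m, m < 2*N →
        -((2 * (N : ℂ) ^ 2) / (2 * (N : ℂ) - 1)) * (((ρ:ℝ):ℂ)*ζ^m)^(2*N-1)
          + (starRingEnd ℂ) (((ρ:ℝ):ℂ)*ζ^m) = 0 := by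
      intro m hm
      have hz0 : ((ρ:ℝ):ℂ) * ζ^m ≠ 0 := mul_ne_zero hρC (pow_ne_zero _ hζ0)
      have hEm := (hchar _ hz0).mpr ⟨m, hm, rfl⟩
      rw [← hcC]
      linear_combination -hEm
    have h1 : (((ρ:ℝ):ℂ)*ζ^j)^N = (((ρ:ℝ):ℂ)*ζ^k)^N := (hpar j k).mpr hpjk
    simp only [Hdeg, Prod.mk.injEq]
    constructor
    · rw [← map_pow, ← map_pow, h1]
    · rw [hE j hj, hE k hk]
  -- forward direction
  have hforward : ∀ z₁ z₂ : ℂ, z₁ ≠ z₂ → Hdeg N z₁ = Hdeg N z₂ →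
      ∃ j k, j < 2*N ∧ k < 2*N ∧ j % 2 = k % 2 ∧ j ≠ k ∧
        z₁ = ((ρ:ℝ):ℂ)*ζ^j ∧ z₂ = ((ρ:ℝ):ℂ)*ζ^k := by
    intro z₁ z₂ hne hH
    simp only [Hdeg, Prod.mk.injEq] at hH
    obtain ⟨h1, h2⟩ := hH
    have hNN : z₁^N = z₂^N := by
      apply conj_cancel
      simpa [map_pow] using h1
    have hz₁ : z₁ ≠ 0 := by
      intro h0
      rw [h0] at hNN
      have hz2 : z₂ = 0 := by
        have h3 := hNN.symm
        rw [zero_pow (by omega : N ≠ 0)] at h3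
        exact pow_eq_zero_iff (by omega : N ≠ 0) |>.mp h3
      exact hne (by rw [h0, hz2])
    have hz₂ : z₂ ≠ 0 := by
      intro h0
      rw [h0] at hNN
      have hz1 : z₁ = 0 := by
        rw [zero_pow (by omega : N ≠ 0)] at hNN
        exact pow_eq_zero_iff (by omega : N ≠ 0) |>.mp hNN
      exact hne (by rw [h0, hz1])
    set ν := z₂ / z₁ with hν_def
    have hz₂eq : z₂ = ν * z₁ := (div_mul_cancel₀ _ hz₁).symm
    have hνN : ν^N = 1 := by
      rw [hν_def, div_pow, ← hNN, div_self (pow_ne_zero _ hz₁)]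
    have hν1 : ν ≠ 1 := by
      intro h
      rw [h, one_mul] at hz₂eq
      exact hne hz₂eq.symm
    have hν0 : ν ≠ 0 := by
      intro h
      rw [h, zero_pow (by omega : N ≠ 0)] at hνN
      exact zero_ne_one hνN
    have hpowsplit : ν^N = ν * ν^(N-1) := by
      rw [← pow_succ']; congr 1; omega
    have hconjν : (starRingEnd ℂ) ν = ν^(N-1) := by
      have habs : ‖ν‖ = 1 :=
        pow_inj_nonneg (norm_nonneg _) zero_le_one (n := N) (by omega)
          (by rw [← norm_pow, hνN, norm_one, one_pow])
      have hA : ν * (starRingEnd ℂ) ν = 1 := by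
        rw [Complex.mul_conj, Complex.normSq_eq_norm_sq, habs]
        norm_num
      have hB : ν * ν^(N-1) = 1 := by rw [← hpowsplit, hνN]
      exact mul_left_cancel₀ hν0 (hA.trans hB.symm)
    have hν2N : ν^(2*N-1) = ν^(N-1) := by
      have hsp : (2*N-1) = N + (N-1) := by omega
      rw [hsp, pow_add, hνN, one_mul]
    rw [← hcC] at h2
    have hw : ((c:ℝ):ℂ) * z₁^(2*N-1) = (starRingEnd ℂ) z₁ := by
      have hrhs : -((c:ℝ):ℂ) * z₂^(2*N-1) + (starRingEnd ℂ) z₂ =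
          ν^(N-1) * (-((c:ℝ):ℂ) * z₁^(2*N-1) + (starRingEnd ℂ) z₁) := by
        rw [hz₂eq, map_mul, hconjν, mul_pow, hν2N]
        ring
      rw [hrhs] at h2
      have hfac : (1 - ν^(N-1)) * (-((c:ℝ):ℂ) * z₁^(2*N-1) + (starRingEnd ℂ) z₁) = 0 := by
        linear_combination h2
      have hν1' : ν^(N-1) ≠ 1 := by
        intro h
        apply hν1
        have hthis : ν^N = ν := by rw [hpowsplit, h, mul_one]
        rw [← hthis, hνN]
      have hzero : -((c:ℝ):ℂ) * z₁^(2*N-1) + (starRingEnd ℂ) z₁ = 0 := by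
        rcases mul_eq_zero.mp hfac with h | h
        · exact absurd (by linear_combination -h : ν^(N-1) = 1) hν1'
        · exact h
      linear_combination -hzero
    have hw₂ : ((c:ℝ):ℂ) * z₂^(2*N-1) = (starRingEnd ℂ) z₂ := by
      rw [hz₂eq, map_mul, hconjν, mul_pow, hν2N, ← hw]
      ring
    obtain ⟨j, hj, hje⟩ := (hchar z₁ hz₁).mp hw
    obtain ⟨k, hk, hke⟩ := (hchar z₂ hz₂).mp hw₂
    refine ⟨j, k, hj, hk, ?_, ?_, hje, hke⟩
    · exact (hpar j k).mp (by rw [← hje, ← hke]; exact hNN)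
    · intro h
      apply hne
      rw [hje, hke, h]
  -- the set of pairs as a finset image
  set T : Finset (ℕ × ℕ) := ((Finset.range (2*N)) ×ˢ (Finset.range (2*N))).filter
    (fun p => p.1 < p.2 ∧ p.1 % 2 = p.2 % 2) with hT_def
  set f : ℕ × ℕ → Set ℂ := fun p => ({((ρ:ℝ):ℂ) * ζ^p.1, ((ρ:ℝ):ℂ) * ζ^p.2} : Set ℂ)
    with hf_def
  have hmemT : ∀ p : ℕ × ℕ, p ∈ T ↔ p.1 < 2*N ∧ p.2 < 2*N ∧ p.1 < p.2 ∧ p.1 % 2 = p.2 % 2 := by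
    intro p
    simp only [hT_def, Finset.mem_filter, Finset.mem_product, Finset.mem_range]
    tauto
  have hset : {s : Set ℂ | ∃ z₁ z₂ : ℂ, z₁ ≠ z₂ ∧ s = {z₁, z₂} ∧ Hdeg N z₁ = Hdeg N z₂}
      = ↑(T.image f) := by
    ext s
    simp only [Set.mem_setOf_eq, Finset.coe_image, Set.mem_image, Finset.mem_coe]
    constructor
    · rintro ⟨z₁, z₂, hne, rfl, hH⟩
      obtain ⟨j, k, hj, hk, hpjk, hjk, rfl, rfl⟩ := hforward z₁ z₂ hne hH
      rcases lt_or_gt_of_ne hjk with h | h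
      · exact ⟨(j, k), (hmemT (j,k)).mpr ⟨hj, hk, h, hpjk⟩, rfl⟩
      · exact ⟨(k, j), (hmemT (k,j)).mpr ⟨hk, hj, h, hpjk.symm⟩, (Set.pair_comm _ _)⟩
    · rintro ⟨⟨j, k⟩, hmem, rfl⟩
      obtain ⟨hj, hk, hlt, hpjk⟩ := (hmemT (j,k)).mp hmem
      exact ⟨_, _, fun h => absurd (hzinj j k hj hk h) hlt.ne, rfl, hHeq j k hpjk hj hk⟩
  rw [hset, Set.ncard_coe_finset]
  have hinj : Set.InjOn f ↑T := by
    intro p hp q hq h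
    rw [Finset.mem_coe] at hp hq
    obtain ⟨hp1, hp2, hp3, _⟩ := (hmemT p).mp hp
    obtain ⟨hq1, hq2, hq3, _⟩ := (hmemT q).mp hq
    simp only [hf_def] at h
    rcases Set.pair_eq_pair_iff.mp h with ⟨ha, hb⟩ | ⟨ha, hb⟩
    · exact Prod.ext (hzinj _ _ hp1 hq1 ha) (hzinj _ _ hp2 hq2 hb)
    · have e1 := hzinj _ _ hp1 hq2 ha
      have e2 := hzinj _ _ hp2 hq1 hb
      omega
  rw [Finset.card_image_of_injOn hinj, hT_def]
  exact count_pairs N hN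
end
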